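/- Let (X, μ) be a σ-finite measure space with μ ≠ 0, and let f : X → ℝ be a measurable function that is essentially bounded above, with M := essSup_μ f ∈ ℝ, and such that μ({x : f(x) > M − ε}) > 0 for every ε > 0. For each real p < −M define N(p) := sup { ∫_X |h(x)|²/(4(p + f(x))²) dμ(x) : h ∈ L²(X, μ), ‖h‖_{L²} = 1 }. Then N(p) → +∞ as p → (−M)⁻. -/

import Mathlib

open MeasureTheory Filter Topology ENNReal

lemma aux_integral_norm_sq_one {X : Type*} [MeasurableSpace X] {μ : Measure X}
    (h : Lp ℂ 2 μ) (hh : ‖h‖ = 1) : ∫ x, ‖h x‖ ^ 2 ∂μ = 1 := by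
  have hm := Lp.memLp h
  rw [Lp.norm_def, hm.eLpNorm_eq_integral_rpow_norm two_ne_zero ENNReal.ofNat_ne_top,
    ENNReal.toReal_ofReal (by positivity)] at hh
  have h2 : (2:ℝ≥0∞).toReal = 2 := by simp
  rw [h2] at hh
  have hI : (0:ℝ) ≤ ∫ x, ‖h x‖ ^ (2:ℝ) ∂μ := integral_nonneg fun x => by positivity
  have key : ∫ x, ‖h x‖ ^ (2:ℝ) ∂μ = 1 := by
    have h2' := congrArg (fun t : ℝ => t ^ (2:ℝ)) hh
    rwa [← Real.rpow_mul hI, inv_mul_cancel₀ (two_ne_zero), Real.rpow_one, Real.one_rpow] at h2'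
  rw [← key]
  apply integral_congr_ae
  filter_upwards with x
  rw [show (2:ℝ) = ((2:ℕ):ℝ) by norm_num, Real.rpow_natCast]

lemma aux_integrable_norm_sq {X : Type*} [MeasurableSpace X] {μ : Measure X}
    (h : Lp ℂ 2 μ) : Integrable (fun x => ‖h x‖ ^ 2) μ := by
  have := (Lp.memLp h).integrable_norm_rpow two_ne_zero ENNReal.ofNat_ne_top
  apply this.congr
  filter_upwards with x
  have h2 : (2:ℝ≥0∞).toReal = 2 := by simp
  rw [h2, show (2:ℝ) = ((2:ℕ):ℝ) by norm_num, Real.rpow_natCast]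

theorem statement9 {X : Type*} [MeasurableSpace X] (μ : Measure X)
    [SigmaFinite μ] (hμ : μ ≠ 0)
    (f : X → ℝ) (hf : Measurable f) (M : ℝ)
    (hM : ∀ᵐ x ∂μ, f x ≤ M)
    (hMleast : ∀ M' : ℝ, (∀ᵐ x ∂μ, f x ≤ M') → M ≤ M')
    (hpos : ∀ ε > (0 : ℝ), 0 < μ {x | M - ε < f x}) :
    Tendsto (fun p : ℝ => sSup {s : ℝ | ∃ h : Lp ℂ 2 μ, ‖h‖ = 1 ∧
        s = ∫ x, ‖h x‖ ^ 2 / (4 * (p + f x) ^ 2) ∂μ})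
      (𝓝[<] (-M)) atTop := by
  rw [tendsto_atTop]
  intro b
  set s0 : ℝ := Real.sqrt (max b 1) with hs0
  have hs0ge : 1 ≤ s0 :=
    le_trans (le_of_eq Real.sqrt_one.symm) (Real.sqrt_le_sqrt (le_max_right b 1))
  have hs0pos : 0 < s0 := lt_of_lt_of_le one_pos hs0ge
  set ε : ℝ := 1 / (4 * s0) with hεdef
  have hεpos : 0 < ε := by positivity
  have hbound : b ≤ 1 / (16 * ε ^ 2) := by
    have hsq : s0 ^ 2 = max b 1 := Real.sq_sqrt (le_trans zero_le_one (le_max_right b 1))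
    have h1 : 1 / (16 * ε ^ 2) = s0 ^ 2 := by
      rw [hεdef]; field_simp; ring
    rw [h1, hsq]; exact le_max_left b 1
  -- find a subset of finite positive measure
  have hApos : (0:ℝ≥0∞) < μ {x | M - ε < f x} := hpos ε hεpos
  have hAmeas : MeasurableSet {x | M - ε < f x} := measurableSet_lt measurable_const hf
  obtain ⟨B, hBmeas, hBsub, hBpos, hBfin⟩ := Measure.exists_subset_measure_lt_top hAmeas hApos
  set t : ℝ := (μ B).toReal with ht
  have htpos : 0 < t := ENNReal.toReal_pos hBpos.ne' hBfin.ne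
  set c : ℂ := ((t ^ (-(1:ℝ)/2) : ℝ) : ℂ) with hc
  have hcnorm : ‖c‖ = t ^ (-(1:ℝ)/2) := by
    rw [hc, Complex.norm_real, Real.norm_eq_abs, abs_of_nonneg (Real.rpow_nonneg htpos.le _)]
  have hc2 : ‖c‖ ^ 2 = t⁻¹ := by
    rw [hcnorm, ← Real.rpow_natCast (t ^ (-(1:ℝ)/2)) 2, ← Real.rpow_mul htpos.le]
    norm_num
    exact Real.rpow_neg_one t
  set h0 : Lp ℂ 2 μ := indicatorConstLp 2 hBmeas hBfin.ne c with hh0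
  have h0norm : ‖h0‖ = 1 := by
    rw [hh0, norm_indicatorConstLp two_ne_zero ENNReal.ofNat_ne_top, hcnorm, measureReal_def, ← ht]
    have h2 : 1 / (2:ℝ≥0∞).toReal = (2:ℝ)⁻¹ := by simp
    rw [h2, ← Real.rpow_add htpos]
    norm_num
  filter_upwards [Ioo_mem_nhdsLT_of_mem
    (show -M ∈ Set.Ioc (-M - ε) (-M) from ⟨by linarith, le_refl _⟩)] with p hp
  obtain ⟨hp1, hp2⟩ := hp
  set δ : ℝ := -(p + M) with hδ
  have hδpos : 0 < δ := by rw [hδ]; linarith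
  have hδε : δ < ε := by rw [hδ]; linarith
  -- a.e. lower bound on the denominator
  have hden : ∀ᵐ x ∂μ, δ ^ 2 ≤ (p + f x) ^ 2 := by
    filter_upwards [hM] with x hx
    have h1 : p + f x ≤ -δ := by rw [hδ]; linarith
    nlinarith
  -- for any unit h, the integrand is integrable and its integral is ≤ 1/(4δ²)
  have key : ∀ h : Lp ℂ 2 μ, ‖h‖ = 1 →
      Integrable (fun x => ‖h x‖ ^ 2 / (4 * (p + f x) ^ 2)) μ ∧
      ∫ x, ‖h x‖ ^ 2 / (4 * (p + f x) ^ 2) ∂μ ≤ 1 / (4 * δ ^ 2) := by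
    intro h hh
    have hsqint := aux_integrable_norm_sq h
    have hmeas : AEStronglyMeasurable (fun x => ‖h x‖ ^ 2 / (4 * (p + f x) ^ 2)) μ := by
      apply AEMeasurable.aestronglyMeasurable
      exact (((Lp.aestronglyMeasurable h).norm.aemeasurable.pow_const 2).div
        ((measurable_const.mul (((hf.const_add p).pow_const 2))).aemeasurable))
    have hbd : ∀ᵐ x ∂μ, ‖h x‖ ^ 2 / (4 * (p + f x) ^ 2) ≤ ‖h x‖ ^ 2 / (4 * δ ^ 2) := by
      filter_upwards [hden] with x hx
      exact div_le_div_of_nonneg_left (by positivity) (by positivity) (by linarith)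
    have hint : Integrable (fun x => ‖h x‖ ^ 2 / (4 * (p + f x) ^ 2)) μ := by
      apply Integrable.mono (hsqint.div_const (4 * δ ^ 2)) hmeas
      filter_upwards [hbd] with x hx
      rw [Real.norm_eq_abs, Real.norm_eq_abs, abs_of_nonneg (by positivity),
        abs_of_nonneg (by positivity)]
      exact hx
    refine ⟨hint, ?_⟩
    calc ∫ x, ‖h x‖ ^ 2 / (4 * (p + f x) ^ 2) ∂μ
        ≤ ∫ x, ‖h x‖ ^ 2 / (4 * δ ^ 2) ∂μ :=
          integral_mono_ae hint (hsqint.div_const _) hbd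
      _ = (∫ x, ‖h x‖ ^ 2 ∂μ) / (4 * δ ^ 2) := integral_div _ _
      _ = 1 / (4 * δ ^ 2) := by rw [aux_integral_norm_sq_one h hh]
  -- the set is bounded above
  have hbdd : BddAbove {s : ℝ | ∃ h : Lp ℂ 2 μ, ‖h‖ = 1 ∧
      s = ∫ x, ‖h x‖ ^ 2 / (4 * (p + f x) ^ 2) ∂μ} := by
    refine ⟨1 / (4 * δ ^ 2), ?_⟩
    rintro s ⟨h, hh, rfl⟩
    exact (key h hh).2
  -- the witness h0 gives a large element
  have hmem : (∫ x, ‖h0 x‖ ^ 2 / (4 * (p + f x) ^ 2) ∂μ) ∈ {s : ℝ | ∃ h : Lp ℂ 2 μ, ‖h‖ = 1 ∧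
      s = ∫ x, ‖h x‖ ^ 2 / (4 * (p + f x) ^ 2) ∂μ} := ⟨h0, h0norm, rfl⟩
  have hg0int : Integrable (B.indicator fun _ => ‖c‖ ^ 2 / (16 * ε ^ 2)) μ := by
    rw [integrable_indicator_iff hBmeas]
    exact integrableOn_const hBfin.ne
  have hg0 : ∫ x, B.indicator (fun _ => ‖c‖ ^ 2 / (16 * ε ^ 2)) x ∂μ = 1 / (16 * ε ^ 2) := by
    rw [integral_indicator_const _ hBmeas, smul_eq_mul, measureReal_def, ← ht, hc2]
    field_simp
  have hlow : 1 / (16 * ε ^ 2) ≤ ∫ x, ‖h0 x‖ ^ 2 / (4 * (p + f x) ^ 2) ∂μ := by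
    rw [← hg0]
    apply integral_mono_ae hg0int (key h0 h0norm).1
    filter_upwards [hM, indicatorConstLp_coeFn (p := 2) (hs := hBmeas) (hμs := hBfin.ne)
      (c := c)] with x hx1 hx2
    by_cases hxB : x ∈ B
    · rw [Set.indicator_of_mem hxB]
      rw [hh0] at *
      rw [hx2, Set.indicator_of_mem hxB]
      have hxA : M - ε < f x := hBsub hxB
      have h1 : p + f x ≤ -δ := by rw [hδ]; linarith
      have h2 : -(δ + ε) < p + f x := by rw [hδ]; linarith
      exact div_le_div_of_nonneg_left (by positivity) (by nlinarith) (by nlinarith)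
    · rw [Set.indicator_of_notMem hxB]
      positivity
  calc b ≤ 1 / (16 * ε ^ 2) := hbound
    _ ≤ ∫ x, ‖h0 x‖ ^ 2 / (4 * (p + f x) ^ 2) ∂μ := hlow
    _ ≤ sSup _ := le_csSup hbdd hmem
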